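/- arXiv:0912.5403 — 4 statements merged into one kernel-verified Lean document; each statement's English description precedes it below -/
import Mathlib

section
/- In U_q(gl(N)), the lowering composite root vector e_{ji} does not depend on the choice of the intermediate index: for all 1 ≤ i < k < j ≤ N one has [e_{jk}, e_{ki}]_q = e_{ji}, i.e. e_{jk} e_{ki} - q e_{ki} e_{jk} = e_{ji}. -/
/-!
Common setup: the quantum algebra `U_q(gl(N))` over `k = ℚ(q)`, presented by
generators `q^{±e_{ii}}` (`K i`, `Kinv i`), `e_{i,i+1}` (`E i`), `e_{i+1,i}` (`F i`)
(1-based indices; out-of-range generators are set to `0`, which yields an algebra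
isomorphic to the usual presentation), together with the composite root vectors.
-/

noncomputable section

open scoped Classical

/-- The ground field `k = ℚ(q)`. -/
abbrev kq : Type := RatFunc ℚ

/-- The indeterminate `q`. -/
def qq : kq := RatFunc.X

/-- Generators of `U_q(gl(N))`: `K i = q^{e_{ii}}`, `Kinv i = q^{-e_{ii}}`,
`E i = e_{i,i+1}`, `F i = e_{i+1,i}` (1-based). -/
inductive UqGen : Type
  | K : ℕ → UqGen
  | Kinv : ℕ → UqGen
  | E : ℕ → UqGen
  | F : ℕ → UqGen

/-- `q^{e_{ii}}` in the free algebra. -/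
def fK (i : ℕ) : FreeAlgebra kq UqGen := FreeAlgebra.ι kq (UqGen.K i)
/-- `q^{-e_{ii}}` in the free algebra. -/
def fKinv (i : ℕ) : FreeAlgebra kq UqGen := FreeAlgebra.ι kq (UqGen.Kinv i)
/-- `e_{i,i+1}` in the free algebra. -/
def fE (i : ℕ) : FreeAlgebra kq UqGen := FreeAlgebra.ι kq (UqGen.E i)
/-- `e_{i+1,i}` in the free algebra. -/
def fF (i : ℕ) : FreeAlgebra kq UqGen := FreeAlgebra.ι kq (UqGen.F i)

/-- The defining relations of `U_q(gl(N))`.  Valid index ranges: `1 ≤ i ≤ N` for the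
Cartan generators, `1 ≤ i ≤ N-1` for `E i`, `F i`; out-of-range generators are set to `0`. -/
inductive UqRel (N : ℕ) : FreeAlgebra kq UqGen → FreeAlgebra kq UqGen → Prop
  | Kzero (i : ℕ) (h : i = 0 ∨ N < i) : UqRel N (fK i) 0
  | Kinvzero (i : ℕ) (h : i = 0 ∨ N < i) : UqRel N (fKinv i) 0
  | Ezero (i : ℕ) (h : i = 0 ∨ N < i + 1) : UqRel N (fE i) 0
  | Fzero (i : ℕ) (h : i = 0 ∨ N < i + 1) : UqRel N (fF i) 0
  | KKinv (i : ℕ) (h1 : 1 ≤ i) (h2 : i ≤ N) : UqRel N (fK i * fKinv i) 1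
  | KinvK (i : ℕ) (h1 : 1 ≤ i) (h2 : i ≤ N) : UqRel N (fKinv i * fK i) 1
  | KK (i j : ℕ) (h1 : 1 ≤ i) (h2 : i ≤ N) (h3 : 1 ≤ j) (h4 : j ≤ N) :
      UqRel N (fK i * fK j) (fK j * fK i)
  | KE (i j : ℕ) (h1 : 1 ≤ i) (h2 : i ≤ N) (h3 : 1 ≤ j) (h4 : j + 1 ≤ N) :
      UqRel N (fK i * fE j * fKinv i)
        ((qq ^ (((if i = j then 1 else 0) - (if i = j + 1 then 1 else 0) : ℤ))) • fE j)
  | KF (i j : ℕ) (h1 : 1 ≤ i) (h2 : i ≤ N) (h3 : 1 ≤ j) (h4 : j + 1 ≤ N) :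
      UqRel N (fK i * fF j * fKinv i)
        ((qq ^ (((if i = j + 1 then 1 else 0) - (if i = j then 1 else 0) : ℤ))) • fF j)
  | EF (i j : ℕ) (h1 : 1 ≤ i) (h2 : i + 1 ≤ N) (h3 : 1 ≤ j) (h4 : j + 1 ≤ N) :
      UqRel N (fE i * fF j - fF j * fE i)
        (if i = j then (qq - qq⁻¹)⁻¹ • (fK i * fKinv (i + 1) - fK (i + 1) * fKinv i) else 0)
  | EE (i j : ℕ) (h1 : 1 ≤ i) (h2 : i + 1 ≤ N) (h3 : 1 ≤ j) (h4 : j + 1 ≤ N)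
      (h5 : i + 2 ≤ j ∨ j + 2 ≤ i) : UqRel N (fE i * fE j) (fE j * fE i)
  | FF (i j : ℕ) (h1 : 1 ≤ i) (h2 : i + 1 ≤ N) (h3 : 1 ≤ j) (h4 : j + 1 ≤ N)
      (h5 : i + 2 ≤ j ∨ j + 2 ≤ i) : UqRel N (fF i * fF j) (fF j * fF i)
  | SerreE (i j : ℕ) (h1 : 1 ≤ i) (h2 : i + 1 ≤ N) (h3 : 1 ≤ j) (h4 : j + 1 ≤ N)
      (h5 : i + 1 = j ∨ j + 1 = i) :
      UqRel N (fE i ^ 2 * fE j - (qq + qq⁻¹) • (fE i * fE j * fE i) + fE j * fE i ^ 2) 0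
  | SerreF (i j : ℕ) (h1 : 1 ≤ i) (h2 : i + 1 ≤ N) (h3 : 1 ≤ j) (h4 : j + 1 ≤ N)
      (h5 : i + 1 = j ∨ j + 1 = i) :
      UqRel N (fF i ^ 2 * fF j - (qq + qq⁻¹) • (fF i * fF j * fF i) + fF j * fF i ^ 2) 0

/-- The quantum algebra `U_q(gl(N))`. -/
abbrev Uq (N : ℕ) : Type := RingQuot (UqRel N)

/-- Canonical projection onto `U_q(gl(N))`. -/
def mkU (N : ℕ) : FreeAlgebra kq UqGen →ₐ[kq] Uq N := RingQuot.mkAlgHom kq (UqRel N)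

/-- `q^{e_{ii}}` in `U_q(gl(N))`. -/
def KU (N i : ℕ) : Uq N := mkU N (fK i)
/-- `q^{-e_{ii}}` in `U_q(gl(N))`. -/
def KinvU (N i : ℕ) : Uq N := mkU N (fKinv i)
/-- `e_{i,i+1}` in `U_q(gl(N))`. -/
def EU (N i : ℕ) : Uq N := mkU N (fE i)
/-- `e_{i+1,i}` in `U_q(gl(N))`. -/
def FU (N i : ℕ) : Uq N := mkU N (fF i)

/-- `eUpD N i d` is the raising composite root vector `e_{i,i+d}`:
`e_{i,i+1} = E i` and `e_{ij} = e_{i,j-1} e_{j-1,j} - q⁻¹ e_{j-1,j} e_{i,j-1}`. -/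
def eUpD (N i : ℕ) : ℕ → Uq N
  | 0 => 0
  | 1 => EU N i
  | (d + 2) => eUpD N i (d + 1) * EU N (i + d + 1) - qq⁻¹ • (EU N (i + d + 1) * eUpD N i (d + 1))

/-- `eDnD N i d` is the lowering composite root vector `e_{i+d,i}`:
`e_{i+1,i} = F i` and `e_{ji} = e_{j,j-1} e_{j-1,i} - q e_{j-1,i} e_{j,j-1}`. -/
def eDnD (N i : ℕ) : ℕ → Uq N
  | 0 => 0
  | 1 => FU N i
  | (d + 2) => FU N (i + d + 1) * eDnD N i (d + 1) - qq • (eDnD N i (d + 1) * FU N (i + d + 1))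

/-- The Cartan–Weyl root vector `e_{ij}` (`i ≠ j`) of `U_q(gl(N))`. -/
def eGen (N i j : ℕ) : Uq N :=
  if i < j then eUpD N i (j - i) else if j < i then eDnD N j (i - j) else 0

/-- Primed raising composite root vectors: `e'_{i,i+1} = e_{i,i+1}` and
`e'_{ij} = e'_{i,j-1} e_{j-1,j} - q e_{j-1,j} e'_{i,j-1}`. -/
def eUpD' (N i : ℕ) : ℕ → Uq N
  | 0 => 0
  | 1 => EU N i
  | (d + 2) => eUpD' N i (d + 1) * EU N (i + d + 1) - qq • (EU N (i + d + 1) * eUpD' N i (d + 1))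

/-- Primed lowering composite root vectors: `e'_{i+1,i} = e_{i+1,i}` and
`e'_{ji} = e_{j,j-1} e'_{j-1,i} - q⁻¹ e'_{j-1,i} e_{j,j-1}`. -/
def eDnD' (N i : ℕ) : ℕ → Uq N
  | 0 => 0
  | 1 => FU N i
  | (d + 2) => FU N (i + d + 1) * eDnD' N i (d + 1) - qq⁻¹ • (eDnD' N i (d + 1) * FU N (i + d + 1))

/-- The primed Cartan–Weyl root vector `e'_{ij}` of `U_q(gl(N))`. -/
def eGen' (N i j : ℕ) : Uq N :=
  if i < j then eUpD' N i (j - i) else if j < i then eDnD' N j (i - j) else 0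

end

-- Auxiliary lemmas

lemma FF_rel (N i j : ℕ) (h1 : 1 ≤ i) (h2 : i + 1 ≤ N) (h3 : 1 ≤ j) (h4 : j + 1 ≤ N)
    (h5 : i + 2 ≤ j ∨ j + 2 ≤ i) : FU N i * FU N j = FU N j * FU N i := by
  have := RingQuot.mkAlgHom_rel kq (UqRel.FF (N := N) i j h1 h2 h3 h4 h5)
  simpa [mkU, FU, map_mul] using this

lemma Fcomm (N i m : ℕ) (hi : 1 ≤ i) :
    ∀ d, 1 ≤ d → i + d + 1 ≤ m → m + 1 ≤ N → Commute (FU N m) (eDnD N i d)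
  | 0, h, _, _ => absurd h (by omega)
  | 1, _, hm, hN => by
      have : eDnD N i 1 = FU N i := rfl
      rw [Commute, SemiconjBy, this]
      exact FF_rel N m i (by omega) hN hi (by omega) (Or.inr (by omega))
  | (d + 2), _, hm, hN => by
      have hdef : eDnD N i (d + 2) =
          FU N (i + d + 1) * eDnD N i (d + 1) -
            qq • (eDnD N i (d + 1) * FU N (i + d + 1)) := rfl
      have hA : Commute (FU N m) (FU N (i + d + 1)) := by
        rw [Commute, SemiconjBy]
        exact FF_rel N m (i + d + 1) (by omega) hN (by omega) (by omega) (Or.inr (by omega))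
      have hB : Commute (FU N m) (eDnD N i (d + 1)) :=
        Fcomm N i m hi (d + 1) (by omega) (by omega) hN
      rw [hdef]
      exact (hA.mul_right hB).sub_right ((hB.mul_right hA).smul_right qq)

lemma qJacobi {R : Type*} [Ring R] [Algebra kq R] (a b c : R) (h : c * b = b * c) :
    (c * a - qq • (a * c)) * b - qq • (b * (c * a - qq • (a * c))) =
      c * (a * b - qq • (b * a)) - qq • ((a * b - qq • (b * a)) * c) := by
  have h2 : b * (c * a) = c * (b * a) := by rw [← mul_assoc, ← h, mul_assoc]
  simp only [sub_mul, mul_sub, smul_mul_assoc, mul_smul_comm, smul_sub, smul_smul, mul_assoc,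
    h, h2]
  abel

lemma key (N i k : ℕ) (hi : 1 ≤ i) (hik : i < k) :
    ∀ d, 1 ≤ d → k + d ≤ N →
      eDnD N k d * eDnD N i (k - i) - qq • (eDnD N i (k - i) * eDnD N k d) =
        eDnD N i (k + d - i)
  | 0, h, _ => absurd h (by omega)
  | 1, _, hN => by
      obtain ⟨e, he⟩ : ∃ e, k - i = e + 1 := ⟨k - i - 1, by omega⟩
      have h1 : eDnD N k 1 = FU N k := rfl
      have h2 : eDnD N i (e + 2) =
          FU N (i + e + 1) * eDnD N i (e + 1) -
            qq • (eDnD N i (e + 1) * FU N (i + e + 1)) := rfl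
      rw [show k + 1 - i = e + 2 from by omega, h1, h2, he,
        show i + e + 1 = k from by omega]
  | (d + 2), _, hN => by
      have hdef : eDnD N k (d + 2) =
          FU N (k + d + 1) * eDnD N k (d + 1) -
            qq • (eDnD N k (d + 1) * FU N (k + d + 1)) := rfl
      have hrhs : eDnD N i ((k + d - i) + 2) =
          FU N (i + (k + d - i) + 1) * eDnD N i ((k + d - i) + 1) -
            qq • (eDnD N i ((k + d - i) + 1) * FU N (i + (k + d - i) + 1)) := rfl
      have hcb : FU N (k + d + 1) * eDnD N i (k - i) =
          eDnD N i (k - i) * FU N (k + d + 1) :=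
        Fcomm N i (k + d + 1) hi (k - i) (by omega) (by omega) (by omega)
      have ih := key N i k hi hik (d + 1) (by omega) (by omega)
      rw [show k + (d + 2) - i = (k + d - i) + 2 from by omega, hrhs,
        show i + (k + d - i) + 1 = k + d + 1 from by omega,
        show (k + d - i) + 1 = k + (d + 1) - i from by omega, ← ih, hdef]
      exact qJacobi (eDnD N k (d + 1)) (eDnD N i (k - i)) (FU N (k + d + 1)) hcb

/-- in `U_q(gl(N))`, for `1 ≤ i < k < j ≤ N` one has
`[e_{jk}, e_{ki}]_q = e_{ji}`, i.e. `e_{jk} e_{ki} - q e_{ki} e_{jk} = e_{ji}`. -/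
theorem lowering_root_vector_indep_of_intermediate (N : ℕ) (hN : 2 ≤ N) (i k j : ℕ)
    (hi : 1 ≤ i) (hik : i < k) (hkj : k < j) (hj : j ≤ N) :
    eGen N j k * eGen N k i - qq • (eGen N k i * eGen N j k) = eGen N j i := by
  rw [show eGen N j k = eDnD N k (j - k) from by
        rw [eGen, if_neg (by omega), if_pos (by omega)],
      show eGen N k i = eDnD N i (k - i) from by
        rw [eGen, if_neg (by omega), if_pos (by omega)],
      show eGen N j i = eDnD N i (j - i) from by
        rw [eGen, if_neg (by omega), if_pos (by omega)]]
  have h := key N i k hi hik (j - k) (by omega) (by omega)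
  rwa [show k + (j - k) - i = j - i from by omega] at h
end

section
/- In U_q(gl(N)), for all 1 ≤ i < j ≤ N one has [e_{ij}, e_{ji}] = (q^{e_{ii} - e_{jj}} - q^{e_{jj} - e_{ii}})/(q - q^{-1}), i.e. e_{ij} e_{ji} - e_{ji} e_{ij} = (q^{e_{ii}} q^{-e_{jj}} - q^{e_{jj}} q^{-e_{ii}})/(q - q^{-1}). -/
/-! ### Auxiliary generic lemmas -/

section Generic
variable {K : Type*} [Field K] {R : Type*} [Ring R] [Algebra K R]

lemma aux_ext_comm {a b y : R} (h : a * b = y) : ∀ x : R, a * (b * x) = y * x :=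
  fun x => by rw [← mul_assoc, h]

lemma aux_pair_comm (x y E : R) (c1 c2 : K) (h1 : x * E = c1 • (E * x))
    (h2 : y * E = c2 • (E * y)) : (x * y) * E = (c1 * c2) • (E * (x * y)) := by
  calc x * y * E = x * (y * E) := by rw [mul_assoc]
    _ = x * (c2 • (E * y)) := by rw [h2]
    _ = c2 • (x * E * y) := by rw [mul_smul_comm, mul_assoc]
    _ = c2 • ((c1 • (E * x)) * y) := by rw [h1]
    _ = (c1 * c2) • (E * (x * y)) := by
        rw [smul_mul_assoc, smul_smul, mul_assoc, mul_comm c2 c1]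

lemma aux_inv_swap {k kinv X : R} {c : K} (hc : c ≠ 0) (h1 : k * kinv = 1)
    (h2 : kinv * k = 1) (h : k * X = c • (X * k)) :
    kinv * X = c⁻¹ • (X * kinv) := by
  have h' : c⁻¹ • (k * X) = X * k := by rw [h, inv_smul_smul₀ hc]
  calc kinv * X = kinv * X * (k * kinv) := by rw [h1, mul_one]
    _ = kinv * (X * k) * kinv := by simp only [mul_assoc]
    _ = kinv * (c⁻¹ • (k * X)) * kinv := by rw [h']
    _ = c⁻¹ • (kinv * k * (X * kinv)) := by
        simp only [mul_smul_comm, smul_mul_assoc, mul_assoc]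
    _ = c⁻¹ • (X * kinv) := by rw [h2, one_mul]

lemma aux_comm_smul (w1 w2 c : K) (X Y Z : R) (hXY : X * Y = w1 • (Y * X))
    (hXZ : X * Z = w2 • (Z * X)) :
    X * (Y * Z - c • (Z * Y)) = (w1 * w2) • ((Y * Z - c • (Z * Y)) * X) := by
  simp only [mul_sub, sub_mul, smul_sub, mul_smul_comm, smul_mul_assoc, smul_smul, mul_assoc,
    aux_ext_comm hXY, aux_ext_comm hXZ, hXY, hXZ]
  match_scalars <;> ring

lemma aux_comm (c : K) (X Y Z : R) (hXY : X * Y = Y * X) (hXZ : X * Z = Z * X) :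
    X * (Y * Z - c • (Z * Y)) = (Y * Z - c • (Z * Y)) * X := by
  have h := aux_comm_smul (1 : K) 1 c X Y Z (by simpa using hXY) (by simpa using hXZ)
  simpa using h

set_option maxHeartbeats 2000000 in
lemma key_step (u : K) (hu : u ≠ 0) (hs : u - u⁻¹ ≠ 0)
    (A B E F C C' D D' W1 W2 W3 W4 : R)
    (hAF : A * F = F * A) (hEB : E * B = B * E)
    (hAB : A * B = B * A + (u - u⁻¹)⁻¹ • C - (u - u⁻¹)⁻¹ • C')
    (hEF : E * F = F * E + (u - u⁻¹)⁻¹ • D - (u - u⁻¹)⁻¹ • D')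
    (hCE : C * E = u⁻¹ • (E * C)) (hC'E : C' * E = u • (E * C'))
    (hCF : C * F = u • (F * C)) (hC'F : C' * F = u⁻¹ • (F * C'))
    (hDA : D * A = u⁻¹ • (A * D)) (hD'A : D' * A = u • (A * D'))
    (hDB : D * B = u • (B * D)) (hD'B : D' * B = u⁻¹ • (B * D'))
    (hCD : C * D = W1) (hC'D : C' * D = W2) (hCD' : C * D' = W3) (hC'D' : C' * D' = W4)
    (hDC : D * C = W1) (hDC' : D * C' = W2) (hD'C : D' * C = W3) (hD'C' : D' * C' = W4) :
    (A * E - u⁻¹ • (E * A)) * (F * B - u • (B * F)) -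
      (F * B - u • (B * F)) * (A * E - u⁻¹ • (E * A)) =
      (u - u⁻¹)⁻¹ • W1 - (u - u⁻¹)⁻¹ • W4 := by
  simp only [mul_sub, sub_mul, mul_add, add_mul, smul_mul_assoc, mul_smul_comm, smul_smul,
    smul_add, smul_sub, mul_assoc,
    hAF, hEB, hAB, hEF, hCE, hC'E, hCF, hC'F, hDA, hD'A, hDB, hD'B,
    hCD, hC'D, hCD', hC'D', hDC, hDC', hD'C, hD'C',
    aux_ext_comm hAF, aux_ext_comm hEB, aux_ext_comm hAB, aux_ext_comm hEF, aux_ext_comm hCE,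
    aux_ext_comm hC'E, aux_ext_comm hCF, aux_ext_comm hC'F, aux_ext_comm hDA, aux_ext_comm hD'A,
    aux_ext_comm hDB, aux_ext_comm hD'B, aux_ext_comm hCD, aux_ext_comm hC'D, aux_ext_comm hCD',
    aux_ext_comm hC'D', aux_ext_comm hDC, aux_ext_comm hDC', aux_ext_comm hD'C, aux_ext_comm hD'C']
  have h2 : u * u - 1 ≠ 0 := by
    intro h
    apply hs
    have h3 : u * u = 1 := by rwa [sub_eq_zero] at h
    rw [sub_eq_zero, eq_comm, inv_eq_iff_eq_inv, eq_comm, inv_eq_of_mul_eq_one_right h3]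
  have h4 : u ^ 2 - 1 ≠ 0 := by rw [sq]; exact h2
  match_scalars <;> (field_simp; try ring)

end Generic

/-! ### Basic facts about `qq` -/

lemma qq_ne : (qq : kq) ≠ 0 := RatFunc.X_ne_zero

lemma qsub_ne : (qq : kq) - qq⁻¹ ≠ 0 := by
  rw [sub_ne_zero]
  intro h
  have h2 : (qq : kq) * qq = 1 := by
    nth_rewrite 2 [h]; exact mul_inv_cancel₀ qq_ne
  have h3 := congrArg RatFunc.intDegree h2
  rw [RatFunc.intDegree_mul qq_ne qq_ne] at h3
  simp only [qq, RatFunc.intDegree_X, RatFunc.intDegree_one] at h3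
  omega

/-! ### Relations in `U_q(gl(N))` -/

section UqLemmas
variable (N : ℕ)

lemma mkU_rel {a b : FreeAlgebra kq UqGen} (h : UqRel N a b) : mkU N a = mkU N b :=
  RingQuot.mkAlgHom_rel kq h

lemma KU_mul_KinvU (i : ℕ) (h1 : 1 ≤ i) (h2 : i ≤ N) : KU N i * KinvU N i = 1 := by
  have h := mkU_rel N (UqRel.KKinv i h1 h2)
  simpa only [map_mul, map_one, KU, KinvU] using h

lemma KinvU_mul_KU (i : ℕ) (h1 : 1 ≤ i) (h2 : i ≤ N) : KinvU N i * KU N i = 1 := by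
  have h := mkU_rel N (UqRel.KinvK i h1 h2)
  simpa only [map_mul, map_one, KU, KinvU] using h

lemma KU_mul_EU (i j : ℕ) (h1 : 1 ≤ i) (h2 : i ≤ N) (h3 : 1 ≤ j) (h4 : j + 1 ≤ N) :
    KU N i * EU N j =
      (qq ^ (((if i = j then 1 else 0) - (if i = j + 1 then 1 else 0) : ℤ))) •
        (EU N j * KU N i) := by
  have h := mkU_rel N (UqRel.KE i j h1 h2 h3 h4)
  simp only [map_mul, map_smul, KU, KinvU, EU] at h ⊢
  have hk := KinvU_mul_KU N i h1 h2
  simp only [KU, KinvU] at hk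
  calc mkU N (fK i) * mkU N (fE j)
      = mkU N (fK i) * mkU N (fE j) * (mkU N (fKinv i) * mkU N (fK i)) := by rw [hk, mul_one]
    _ = (mkU N (fK i) * mkU N (fE j) * mkU N (fKinv i)) * mkU N (fK i) := by
        rw [mul_assoc, mul_assoc, mul_assoc]
    _ = ((qq ^ (((if i = j then 1 else 0) - (if i = j + 1 then 1 else 0) : ℤ))) •
          mkU N (fE j)) * mkU N (fK i) := by rw [h]
    _ = _ := by rw [smul_mul_assoc]

lemma KU_mul_FU (i j : ℕ) (h1 : 1 ≤ i) (h2 : i ≤ N) (h3 : 1 ≤ j) (h4 : j + 1 ≤ N) :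
    KU N i * FU N j =
      (qq ^ (((if i = j + 1 then 1 else 0) - (if i = j then 1 else 0) : ℤ))) •
        (FU N j * KU N i) := by
  have h := mkU_rel N (UqRel.KF i j h1 h2 h3 h4)
  simp only [map_mul, map_smul, KU, KinvU, FU] at h ⊢
  have hk := KinvU_mul_KU N i h1 h2
  simp only [KU, KinvU] at hk
  calc mkU N (fK i) * mkU N (fF j)
      = mkU N (fK i) * mkU N (fF j) * (mkU N (fKinv i) * mkU N (fK i)) := by rw [hk, mul_one]
    _ = (mkU N (fK i) * mkU N (fF j) * mkU N (fKinv i)) * mkU N (fK i) := by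
        rw [mul_assoc, mul_assoc, mul_assoc]
    _ = ((qq ^ (((if i = j + 1 then 1 else 0) - (if i = j then 1 else 0) : ℤ))) •
          mkU N (fF j)) * mkU N (fK i) := by rw [h]
    _ = _ := by rw [smul_mul_assoc]

lemma KinvU_mul_EU (i j : ℕ) (h1 : 1 ≤ i) (h2 : i ≤ N) (h3 : 1 ≤ j) (h4 : j + 1 ≤ N) :
    KinvU N i * EU N j =
      (qq ^ (-((if i = j then 1 else 0) - (if i = j + 1 then 1 else 0) : ℤ))) •
        (EU N j * KinvU N i) := by
  rw [zpow_neg]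
  exact aux_inv_swap (zpow_ne_zero _ qq_ne) (KU_mul_KinvU N i h1 h2) (KinvU_mul_KU N i h1 h2)
    (KU_mul_EU N i j h1 h2 h3 h4)

lemma KinvU_mul_FU (i j : ℕ) (h1 : 1 ≤ i) (h2 : i ≤ N) (h3 : 1 ≤ j) (h4 : j + 1 ≤ N) :
    KinvU N i * FU N j =
      (qq ^ (-((if i = j + 1 then 1 else 0) - (if i = j then 1 else 0) : ℤ))) •
        (FU N j * KinvU N i) := by
  rw [zpow_neg]
  exact aux_inv_swap (zpow_ne_zero _ qq_ne) (KU_mul_KinvU N i h1 h2) (KinvU_mul_KU N i h1 h2)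
    (KU_mul_FU N i j h1 h2 h3 h4)

lemma EU_mul_FU_ne (i j : ℕ) (h1 : 1 ≤ i) (h2 : i + 1 ≤ N) (h3 : 1 ≤ j) (h4 : j + 1 ≤ N)
    (hij : i ≠ j) : EU N i * FU N j = FU N j * EU N i := by
  have h := mkU_rel N (UqRel.EF i j h1 h2 h3 h4)
  rw [if_neg hij] at h
  simp only [map_sub, map_mul, map_zero, EU, FU] at h
  rw [sub_eq_zero] at h
  simpa only [EU, FU] using h

lemma EU_mul_FU_eq (i : ℕ) (h1 : 1 ≤ i) (h2 : i + 1 ≤ N) :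
    EU N i * FU N i - FU N i * EU N i =
      (qq - qq⁻¹)⁻¹ • (KU N i * KinvU N (i + 1) - KU N (i + 1) * KinvU N i) := by
  have h := mkU_rel N (UqRel.EF i i h1 h2 h1 h2)
  rw [if_pos rfl] at h
  simpa only [map_sub, map_mul, map_smul, EU, FU, KU, KinvU] using h



lemma KU_comm (i j : ℕ) (h1 : 1 ≤ i) (h2 : i ≤ N) (h3 : 1 ≤ j) (h4 : j ≤ N) :
    KU N i * KU N j = KU N j * KU N i := by
  have h := mkU_rel N (UqRel.KK i j h1 h2 h3 h4)
  simpa only [map_mul, KU] using h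

lemma KinvU_KU_comm (i j : ℕ) (h1 : 1 ≤ i) (h2 : i ≤ N) (h3 : 1 ≤ j) (h4 : j ≤ N) :
    KinvU N j * KU N i = KU N i * KinvU N j := by
  have h := aux_inv_swap (one_ne_zero : (1 : kq) ≠ 0) (KU_mul_KinvU N j h3 h4)
    (KinvU_mul_KU N j h3 h4) (by simpa using KU_comm N j i h3 h4 h1 h2)
  simpa using h

lemma KinvU_KinvU_comm (i j : ℕ) (h1 : 1 ≤ i) (h2 : i ≤ N) (h3 : 1 ≤ j) (h4 : j ≤ N) :
    KinvU N j * KinvU N i = KinvU N i * KinvU N j := by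
  have h := aux_inv_swap (one_ne_zero : (1 : kq) ≠ 0) (KU_mul_KinvU N j h3 h4)
    (KinvU_mul_KU N j h3 h4)
    (by simpa using (KinvU_KU_comm N j i h3 h4 h1 h2).symm)
  simpa using h

lemma FU_comm_eUpD (m : ℕ) (hm : m + 1 ≤ N) :
    ∀ d i, 1 ≤ i → i + d ≤ m → FU N m * eUpD N i d = eUpD N i d * FU N m := by
  intro d
  induction d using Nat.twoStepInduction with
  | zero => intro i _ _; simp [eUpD]
  | one =>
    intro i hi1 hi2
    simp only [eUpD]
    exact (EU_mul_FU_ne N i m hi1 (by omega) (by omega) hm (by omega)).symm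
  | more d _ IH2 =>
    intro i hi1 hi2
    simp only [eUpD]
    exact aux_comm qq⁻¹ (FU N m) (eUpD N i (d + 1)) (EU N (i + d + 1))
      (IH2 i hi1 (by omega))
      ((EU_mul_FU_ne N (i + d + 1) m (by omega) (by omega) (by omega) hm (by omega)).symm)

lemma EU_comm_eDnD (m : ℕ) (hm : m + 1 ≤ N) :
    ∀ d i, 1 ≤ i → i + d ≤ m → EU N m * eDnD N i d = eDnD N i d * EU N m := by
  intro d
  induction d using Nat.twoStepInduction with
  | zero => intro i _ _; simp [eDnD]
  | one =>
    intro i hi1 hi2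
    simp only [eDnD]
    exact EU_mul_FU_ne N m i (by omega) hm hi1 (by omega) (by omega)
  | more d _ IH2 =>
    intro i hi1 hi2
    simp only [eDnD]
    exact aux_comm qq (EU N m) (FU N (i + d + 1)) (eDnD N i (d + 1))
      (EU_mul_FU_ne N m (i + d + 1) (by omega) hm (by omega) (by omega) (by omega))
      (IH2 i hi1 (by omega))

lemma KU_mul_eUpD (m : ℕ) (hm1 : 1 ≤ m) (hm2 : m ≤ N) :
    ∀ d i, 1 ≤ i → i + d ≤ N →
      KU N m * eUpD N i d =
        (qq ^ (((if m = i then 1 else 0) - (if m = i + d then 1 else 0) : ℤ))) •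
          (eUpD N i d * KU N m) := by
  intro d
  induction d using Nat.twoStepInduction with
  | zero => intro i _ _; simp [eUpD]
  | one =>
    intro i hi1 hi2
    simpa only [eUpD] using KU_mul_EU N m i hm1 hm2 hi1 (by omega)
  | more d _ IH2 =>
    intro i hi1 hi2
    simp only [eUpD]
    rw [aux_comm_smul _ _ _ _ _ _ (IH2 i hi1 (by omega))
      (KU_mul_EU N m (i + d + 1) hm1 hm2 (by omega) (by omega)), ← zpow_add₀ qq_ne]
    congr 2
    split_ifs <;> omega

lemma KU_mul_eDnD (m : ℕ) (hm1 : 1 ≤ m) (hm2 : m ≤ N) :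
    ∀ d i, 1 ≤ i → i + d ≤ N →
      KU N m * eDnD N i d =
        (qq ^ (((if m = i + d then 1 else 0) - (if m = i then 1 else 0) : ℤ))) •
          (eDnD N i d * KU N m) := by
  intro d
  induction d using Nat.twoStepInduction with
  | zero => intro i _ _; simp [eDnD]
  | one =>
    intro i hi1 hi2
    simpa only [eDnD] using KU_mul_FU N m i hm1 hm2 hi1 (by omega)
  | more d _ IH2 =>
    intro i hi1 hi2
    simp only [eDnD]
    rw [aux_comm_smul _ _ _ _ _ _
      (KU_mul_FU N m (i + d + 1) hm1 hm2 (by omega) (by omega))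
      (IH2 i hi1 (by omega)), ← zpow_add₀ qq_ne]
    congr 2
    split_ifs <;> omega

lemma KinvU_mul_eUpD (m : ℕ) (hm1 : 1 ≤ m) (hm2 : m ≤ N) (d i : ℕ) (hi : 1 ≤ i)
    (hd : i + d ≤ N) :
    KinvU N m * eUpD N i d =
      (qq ^ (-((if m = i then 1 else 0) - (if m = i + d then 1 else 0) : ℤ))) •
        (eUpD N i d * KinvU N m) := by
  rw [zpow_neg]
  exact aux_inv_swap (zpow_ne_zero _ qq_ne) (KU_mul_KinvU N m hm1 hm2)
    (KinvU_mul_KU N m hm1 hm2) (KU_mul_eUpD N m hm1 hm2 d i hi hd)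

lemma KinvU_mul_eDnD (m : ℕ) (hm1 : 1 ≤ m) (hm2 : m ≤ N) (d i : ℕ) (hi : 1 ≤ i)
    (hd : i + d ≤ N) :
    KinvU N m * eDnD N i d =
      (qq ^ (-((if m = i + d then 1 else 0) - (if m = i then 1 else 0) : ℤ))) •
        (eDnD N i d * KinvU N m) := by
  rw [zpow_neg]
  exact aux_inv_swap (zpow_ne_zero _ qq_ne) (KU_mul_KinvU N m hm1 hm2)
    (KinvU_mul_KU N m hm1 hm2) (KU_mul_eDnD N m hm1 hm2 d i hi hd)

end UqLemmas



section Main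

lemma aux_four_comm {R : Type*} [Ring R] (a b c d : R) (h1 : a * c = c * a)
    (h2 : a * d = d * a) (h3 : b * c = c * b) (h4 : b * d = d * b) :
    (a * b) * (c * d) = (c * d) * (a * b) := by
  simp only [mul_assoc, aux_ext_comm h1, aux_ext_comm h2,
    aux_ext_comm h3, aux_ext_comm h4, h1, h2, h3, h4]

variable (N : ℕ)

set_option maxHeartbeats 1000000 in
lemma comm_main : ∀ d i, 1 ≤ i → i + d + 1 ≤ N →
    eUpD N i (d + 1) * eDnD N i (d + 1) - eDnD N i (d + 1) * eUpD N i (d + 1) =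
      (qq - qq⁻¹)⁻¹ •
        (KU N i * KinvU N (i + d + 1) - KU N (i + d + 1) * KinvU N i) := by
  intro d
  induction d with
  | zero =>
    intro i h1 h2
    show eUpD N i 1 * eDnD N i 1 - eDnD N i 1 * eUpD N i 1 =
      (qq - qq⁻¹)⁻¹ • (KU N i * KinvU N (i + 1) - KU N (i + 1) * KinvU N i)
    simp only [eUpD, eDnD]
    exact EU_mul_FU_eq N i h1 (by omega)
  | succ d IH =>
    intro i h1 h2
    have h2' : i + d + 2 ≤ N := by omega
    have hl1 : 1 ≤ i + d + 1 := by omega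
    have hl2 : i + d + 1 ≤ N := by omega
    have hl1' : 1 ≤ i + d + 2 := by omega
    show eUpD N i (d + 2) * eDnD N i (d + 2) - eDnD N i (d + 2) * eUpD N i (d + 2) =
      (qq - qq⁻¹)⁻¹ • (KU N i * KinvU N (i + d + 2) - KU N (i + d + 2) * KinvU N i)
    simp only [eUpD, eDnD]
    rw [smul_sub]
    have hAF : eUpD N i (d + 1) * FU N (i + d + 1) = FU N (i + d + 1) * eUpD N i (d + 1) :=
      (FU_comm_eUpD N (i + d + 1) h2' (d + 1) i h1 (by omega)).symm
    have hEB : EU N (i + d + 1) * eDnD N i (d + 1) = eDnD N i (d + 1) * EU N (i + d + 1) :=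
      EU_comm_eDnD N (i + d + 1) h2' (d + 1) i h1 (by omega)
    have hAB : eUpD N i (d + 1) * eDnD N i (d + 1) = eDnD N i (d + 1) * eUpD N i (d + 1) +
        (qq - qq⁻¹)⁻¹ • (KU N i * KinvU N (i + d + 1)) -
        (qq - qq⁻¹)⁻¹ • (KU N (i + d + 1) * KinvU N i) := by
      have h := IH i h1 (by omega)
      rw [smul_sub, sub_eq_iff_eq_add] at h
      rw [h]; abel
    have hEF : EU N (i + d + 1) * FU N (i + d + 1) =
        FU N (i + d + 1) * EU N (i + d + 1) +
        (qq - qq⁻¹)⁻¹ • (KU N (i + d + 1) * KinvU N (i + d + 2)) -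
        (qq - qq⁻¹)⁻¹ • (KU N (i + d + 2) * KinvU N (i + d + 1)) := by
      have h := EU_mul_FU_eq N (i + d + 1) hl1 h2'
      rw [smul_sub, sub_eq_iff_eq_add] at h
      rw [h]; abel
    have hCE : (KU N i * KinvU N (i + d + 1)) * EU N (i + d + 1) =
        qq⁻¹ • (EU N (i + d + 1) * (KU N i * KinvU N (i + d + 1))) := by
      have t1 := KU_mul_EU N i (i + d + 1) h1 (by omega) hl1 h2'
      rw [if_neg (by omega : ¬ i = i + d + 1), if_neg (by omega : ¬ i = i + d + 1 + 1)] at t1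
      have t2 := KinvU_mul_EU N (i + d + 1) (i + d + 1) hl1 hl2 hl1 h2'
      rw [if_pos rfl, if_neg (by omega : ¬ i + d + 1 = i + d + 1 + 1)] at t2
      rw [aux_pair_comm _ _ _ _ _ t1 t2]
      norm_num
    have hC'E : (KU N (i + d + 1) * KinvU N i) * EU N (i + d + 1) =
        qq • (EU N (i + d + 1) * (KU N (i + d + 1) * KinvU N i)) := by
      have t1 := KU_mul_EU N (i + d + 1) (i + d + 1) hl1 hl2 hl1 h2'
      rw [if_pos rfl, if_neg (by omega : ¬ i + d + 1 = i + d + 1 + 1)] at t1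
      have t2 := KinvU_mul_EU N i (i + d + 1) h1 (by omega) hl1 h2'
      rw [if_neg (by omega : ¬ i = i + d + 1), if_neg (by omega : ¬ i = i + d + 1 + 1)] at t2
      rw [aux_pair_comm _ _ _ _ _ t1 t2]
      norm_num
    have hCF : (KU N i * KinvU N (i + d + 1)) * FU N (i + d + 1) =
        qq • (FU N (i + d + 1) * (KU N i * KinvU N (i + d + 1))) := by
      have t1 := KU_mul_FU N i (i + d + 1) h1 (by omega) hl1 h2'
      rw [if_neg (by omega : ¬ i = i + d + 1 + 1), if_neg (by omega : ¬ i = i + d + 1)] at t1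
      have t2 := KinvU_mul_FU N (i + d + 1) (i + d + 1) hl1 hl2 hl1 h2'
      rw [if_neg (by omega : ¬ i + d + 1 = i + d + 1 + 1), if_pos rfl] at t2
      rw [aux_pair_comm _ _ _ _ _ t1 t2]
      norm_num
    have hC'F : (KU N (i + d + 1) * KinvU N i) * FU N (i + d + 1) =
        qq⁻¹ • (FU N (i + d + 1) * (KU N (i + d + 1) * KinvU N i)) := by
      have t1 := KU_mul_FU N (i + d + 1) (i + d + 1) hl1 hl2 hl1 h2'
      rw [if_neg (by omega : ¬ i + d + 1 = i + d + 1 + 1), if_pos rfl] at t1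
      have t2 := KinvU_mul_FU N i (i + d + 1) h1 (by omega) hl1 h2'
      rw [if_neg (by omega : ¬ i = i + d + 1 + 1), if_neg (by omega : ¬ i = i + d + 1)] at t2
      rw [aux_pair_comm _ _ _ _ _ t1 t2]
      norm_num
    have hDA : (KU N (i + d + 1) * KinvU N (i + d + 2)) * eUpD N i (d + 1) =
        qq⁻¹ • (eUpD N i (d + 1) * (KU N (i + d + 1) * KinvU N (i + d + 2))) := by
      have t1 := KU_mul_eUpD N (i + d + 1) hl1 hl2 (d + 1) i h1 (by omega)
      rw [if_neg (by omega : ¬ i + d + 1 = i), if_pos (by omega : i + d + 1 = i + (d + 1))] at t1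
      have t2 := KinvU_mul_eUpD N (i + d + 2) hl1' h2' (d + 1) i h1 (by omega)
      rw [if_neg (by omega : ¬ i + d + 2 = i),
        if_neg (by omega : ¬ i + d + 2 = i + (d + 1))] at t2
      rw [aux_pair_comm _ _ _ _ _ t1 t2]
      norm_num
    have hD'A : (KU N (i + d + 2) * KinvU N (i + d + 1)) * eUpD N i (d + 1) =
        qq • (eUpD N i (d + 1) * (KU N (i + d + 2) * KinvU N (i + d + 1))) := by
      have t1 := KU_mul_eUpD N (i + d + 2) hl1' h2' (d + 1) i h1 (by omega)
      rw [if_neg (by omega : ¬ i + d + 2 = i),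
        if_neg (by omega : ¬ i + d + 2 = i + (d + 1))] at t1
      have t2 := KinvU_mul_eUpD N (i + d + 1) hl1 hl2 (d + 1) i h1 (by omega)
      rw [if_neg (by omega : ¬ i + d + 1 = i), if_pos (by omega : i + d + 1 = i + (d + 1))] at t2
      rw [aux_pair_comm _ _ _ _ _ t1 t2]
      norm_num
    have hDB : (KU N (i + d + 1) * KinvU N (i + d + 2)) * eDnD N i (d + 1) =
        qq • (eDnD N i (d + 1) * (KU N (i + d + 1) * KinvU N (i + d + 2))) := by
      have t1 := KU_mul_eDnD N (i + d + 1) hl1 hl2 (d + 1) i h1 (by omega)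
      rw [if_pos (by omega : i + d + 1 = i + (d + 1)), if_neg (by omega : ¬ i + d + 1 = i)] at t1
      have t2 := KinvU_mul_eDnD N (i + d + 2) hl1' h2' (d + 1) i h1 (by omega)
      rw [if_neg (by omega : ¬ i + d + 2 = i + (d + 1)),
        if_neg (by omega : ¬ i + d + 2 = i)] at t2
      rw [aux_pair_comm _ _ _ _ _ t1 t2]
      norm_num
    have hD'B : (KU N (i + d + 2) * KinvU N (i + d + 1)) * eDnD N i (d + 1) =
        qq⁻¹ • (eDnD N i (d + 1) * (KU N (i + d + 2) * KinvU N (i + d + 1))) := by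
      have t1 := KU_mul_eDnD N (i + d + 2) hl1' h2' (d + 1) i h1 (by omega)
      rw [if_neg (by omega : ¬ i + d + 2 = i + (d + 1)),
        if_neg (by omega : ¬ i + d + 2 = i)] at t1
      have t2 := KinvU_mul_eDnD N (i + d + 1) hl1 hl2 (d + 1) i h1 (by omega)
      rw [if_pos (by omega : i + d + 1 = i + (d + 1)), if_neg (by omega : ¬ i + d + 1 = i)] at t2
      rw [aux_pair_comm _ _ _ _ _ t1 t2]
      norm_num
    have hKK1 : KU N (i + d + 1) * KinvU N (i + d + 1) =
        KinvU N (i + d + 1) * KU N (i + d + 1) := by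
      rw [KU_mul_KinvU N _ hl1 hl2, KinvU_mul_KU N _ hl1 hl2]
    have hCD : (KU N i * KinvU N (i + d + 1)) * (KU N (i + d + 1) * KinvU N (i + d + 2)) =
        KU N i * KinvU N (i + d + 2) := by
      calc (KU N i * KinvU N (i + d + 1)) * (KU N (i + d + 1) * KinvU N (i + d + 2))
          = KU N i * ((KinvU N (i + d + 1) * KU N (i + d + 1)) * KinvU N (i + d + 2)) := by
            simp only [mul_assoc]
        _ = KU N i * KinvU N (i + d + 2) := by rw [KinvU_mul_KU N _ hl1 hl2, one_mul]
    have hDCc : (KU N (i + d + 1) * KinvU N (i + d + 2)) * (KU N i * KinvU N (i + d + 1)) =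
        (KU N i * KinvU N (i + d + 1)) * (KU N (i + d + 1) * KinvU N (i + d + 2)) :=
      aux_four_comm _ _ _ _ (KU_comm N (i + d + 1) i hl1 hl2 h1 (by omega))
        hKK1 (KinvU_KU_comm N i (i + d + 2) h1 (by omega) hl1' h2')
        (KinvU_KinvU_comm N (i + d + 1) (i + d + 2) hl1 hl2 hl1' h2')
    have hDC := hDCc.trans hCD
    have hDC' : (KU N (i + d + 1) * KinvU N (i + d + 2)) * (KU N (i + d + 1) * KinvU N i) =
        (KU N (i + d + 1) * KinvU N i) * (KU N (i + d + 1) * KinvU N (i + d + 2)) :=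
      aux_four_comm _ _ _ _ rfl
        ((KinvU_KU_comm N (i + d + 1) i hl1 hl2 h1 (by omega)).symm)
        (KinvU_KU_comm N (i + d + 1) (i + d + 2) hl1 hl2 hl1' h2')
        (KinvU_KinvU_comm N i (i + d + 2) h1 (by omega) hl1' h2')
    have hD'C : (KU N (i + d + 2) * KinvU N (i + d + 1)) * (KU N i * KinvU N (i + d + 1)) =
        (KU N i * KinvU N (i + d + 1)) * (KU N (i + d + 2) * KinvU N (i + d + 1)) :=
      aux_four_comm _ _ _ _ (KU_comm N (i + d + 2) i hl1' h2' h1 (by omega))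
        ((KinvU_KU_comm N (i + d + 2) (i + d + 1) hl1' h2' hl1 hl2).symm)
        (KinvU_KU_comm N i (i + d + 1) h1 (by omega) hl1 hl2) rfl
    have hD'C'eq : (KU N (i + d + 2) * KinvU N (i + d + 1)) * (KU N (i + d + 1) * KinvU N i) =
        KU N (i + d + 2) * KinvU N i := by
      calc (KU N (i + d + 2) * KinvU N (i + d + 1)) * (KU N (i + d + 1) * KinvU N i)
          = KU N (i + d + 2) * ((KinvU N (i + d + 1) * KU N (i + d + 1)) * KinvU N i) := by
            simp only [mul_assoc]
        _ = KU N (i + d + 2) * KinvU N i := by rw [KinvU_mul_KU N _ hl1 hl2, one_mul]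
    have hC'D'c : (KU N (i + d + 1) * KinvU N i) * (KU N (i + d + 2) * KinvU N (i + d + 1)) =
        (KU N (i + d + 2) * KinvU N (i + d + 1)) * (KU N (i + d + 1) * KinvU N i) :=
      aux_four_comm _ _ _ _ (KU_comm N (i + d + 1) (i + d + 2) hl1 hl2 hl1' h2')
        hKK1 (KinvU_KU_comm N (i + d + 2) i hl1' h2' h1 (by omega))
        (KinvU_KinvU_comm N (i + d + 1) i hl1 hl2 h1 (by omega))
    have hC'D' := hC'D'c.trans hD'C'eq
    exact key_step qq qq_ne qsub_ne _ _ _ _ _ _ _ _ _ _ _ _ hAF hEB hAB hEF hCE hC'E hCF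
      hC'F hDA hD'A hDB hD'B hCD rfl rfl hC'D' hDC hDC' hD'C hD'C'eq

end Main


/-- in `U_q(gl(N))`, for `1 ≤ i < j ≤ N`,
`e_{ij} e_{ji} - e_{ji} e_{ij} = (q^{e_{ii}} q^{-e_{jj}} - q^{e_{jj}} q^{-e_{ii}})/(q - q⁻¹)`. -/
theorem commutator_eij_eji (N : ℕ) (hN : 2 ≤ N) (i j : ℕ)
    (hi : 1 ≤ i) (hij : i < j) (hj : j ≤ N) :
    eGen N i j * eGen N j i - eGen N j i * eGen N i j =
      (qq - qq⁻¹)⁻¹ • (KU N i * KinvU N j - KU N j * KinvU N i) := by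
  obtain ⟨d, rfl⟩ : ∃ d, j = i + d + 1 := ⟨j - i - 1, by omega⟩
  have e1 : eGen N i (i + d + 1) = eUpD N i (d + 1) := by
    rw [eGen, if_pos (by omega : i < i + d + 1)]
    congr 1
    omega
  have e2 : eGen N (i + d + 1) i = eDnD N i (d + 1) := by
    rw [eGen, if_neg (by omega : ¬ i + d + 1 < i), if_pos (by omega : i < i + d + 1)]
    congr 1
    omega
  rw [e1, e2]
  exact comm_main N d i hi (by omega)
end

section
/- Let N = n + 1 with n ≥ 1, and let * be the noncompact Cartan involution of U_q(gl(n+1)) with circular q, i.e. the σ-semilinear involutive anti-automorphism with (q^{±e_{ii}})^* = q^{∓e_{ii}}, e_{i,i+1}^* = e_{i+1,i} and e_{i+1,i}^* = e_{i,i+1} for 1 ≤ i ≤ n-1, and e_{n,n+1}^* = -e_{n+1,n}, e_{n+1,n}^* = -e_{n,n+1}. Then for all 1 ≤ i ≤ n one has e_{i,n+1}^* = -e_{n+1,i} and e_{n+1,i}^* = -e_{i,n+1}, while for all 1 ≤ i ≠ j ≤ n one has e_{ij}^* = e_{ji}. -/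
/-- A `σ`-semilinear anti-automorphism of `U_q(gl(N))`: additive, `σ`-semilinear,
unital, anti-multiplicative and bijective. -/
def IsSemilinearAntiAut (N : ℕ) (σ : kq ≃+* kq) (φ : Uq N → Uq N) : Prop :=
  Function.Bijective φ ∧
  (∀ x y : Uq N, φ (x + y) = φ x + φ y) ∧
  (∀ (c : kq) (x : Uq N), φ (c • x) = σ c • φ x) ∧
  φ 1 = 1 ∧
  (∀ x y : Uq N, φ (x * y) = φ y * φ x)

/-- The property of being the noncompact Cartan involution `*` of `U_q(gl(n+1))` with
circular `q`, defining the real form `U_q(u(n,1))`: a `σ`-semilinear anti-automorphism with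
`(q^{±e_{ii}})^* = q^{∓e_{ii}}`, `e_{i,i+1}^* = e_{i+1,i}` and `e_{i+1,i}^* = e_{i,i+1}`
for `i ≠ n`, and `e_{n,n+1}^* = -e_{n+1,n}`, `e_{n+1,n}^* = -e_{n,n+1}`. -/
def IsNoncompactStarCirc (n N : ℕ) (σ : kq ≃+* kq) (φ : Uq N → Uq N) : Prop :=
  IsSemilinearAntiAut N σ φ ∧
  (∀ i, 1 ≤ i → i ≤ N → φ (KU N i) = KinvU N i ∧ φ (KinvU N i) = KU N i) ∧
  (∀ i, 1 ≤ i → i + 1 ≤ N → i ≠ n → φ (EU N i) = FU N i ∧ φ (FU N i) = EU N i) ∧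
  φ (EU N n) = -FU N n ∧ φ (FU N n) = -EU N n

theorem negKeyLeft {A : Type*} [Ring A] {M : Type*} [CommRing M] [Module M A]
    (c : M) (a b : A) : (-a) * b - c • (b * (-a)) = -(a * b - c • (b * a)) := by
  rw [neg_mul, mul_neg, smul_neg, sub_neg_eq_add, neg_sub, neg_add_eq_sub]

theorem negKeyRight {A : Type*} [Ring A] {M : Type*} [CommRing M] [Module M A]
    (c : M) (a b : A) : a * (-b) - c • ((-b) * a) = -(a * b - c • (b * a)) := by
  rw [neg_mul, mul_neg, smul_neg, sub_neg_eq_add, neg_sub, neg_add_eq_sub]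

/-- for the noncompact Cartan involution `*` of `U_q(gl(n+1))` with circular
`q`, one has `e_{i,n+1}^* = -e_{n+1,i}` and `e_{n+1,i}^* = -e_{i,n+1}` for `1 ≤ i ≤ n`, and
`e_{ij}^* = e_{ji}` for `1 ≤ i ≠ j ≤ n`. -/
theorem noncompact_star_circular_on_cartan_weyl (n : ℕ) (hn : 1 ≤ n)
    (σ : kq ≃+* kq) (hσ : σ qq = qq⁻¹)
    (φ : Uq (n + 1) → Uq (n + 1)) (hφ : IsNoncompactStarCirc n (n + 1) σ φ)
    (hinv : ∀ x, φ (φ x) = x) :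
    (∀ i, 1 ≤ i → i ≤ n →
      φ (eGen (n + 1) i (n + 1)) = -eGen (n + 1) (n + 1) i ∧
      φ (eGen (n + 1) (n + 1) i) = -eGen (n + 1) i (n + 1)) ∧
    (∀ i j, 1 ≤ i → i ≤ n → 1 ≤ j → j ≤ n → i ≠ j →
      φ (eGen (n + 1) i j) = eGen (n + 1) j i) := by
  obtain ⟨⟨hbij, hadd, hsmul, hone, hmul⟩, hK, hEF, hEn, hFn⟩ := hφ
  have hneg : ∀ x, φ (-x) = -φ x := fun x => by
    rw [← neg_one_smul kq x, hsmul, map_neg, map_one]; exact neg_one_smul kq (φ x)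
  have hsub : ∀ x y, φ (x - y) = φ x - φ y := fun x y => by
    rw [sub_eq_add_neg, hadd, hneg, sub_eq_add_neg]
  have hσq : σ qq⁻¹ = qq := by rw [map_inv₀, hσ, inv_inv]
  have up : ∀ d i, 1 ≤ i → 1 ≤ d → i + d ≤ n →
      φ (eUpD (n + 1) i d) = eDnD (n + 1) i d := by
    intro d
    induction d with
    | zero => intro i _ h _; omega
    | succ d ih =>
      intro i hi _ hle
      cases d with
      | zero =>
        have hne : i ≠ n := by omega
        simpa [eUpD, eDnD] using (hEF i hi (by omega) hne).1
      | succ d' =>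
        have h1 : φ (eUpD (n + 1) i (d' + 1)) = eDnD (n + 1) i (d' + 1) :=
          ih i hi (by omega) (by omega)
        have hne : i + d' + 1 ≠ n := by omega
        have hE : φ (EU (n + 1) (i + d' + 1)) = FU (n + 1) (i + d' + 1) :=
          (hEF _ (by omega) (by omega) hne).1
        show φ (eUpD (n + 1) i (d' + 2)) = eDnD (n + 1) i (d' + 2)
        rw [eUpD, eDnD, hsub, hmul, hsmul, hmul, hσq, h1, hE]
  have dn : ∀ d i, 1 ≤ i → 1 ≤ d → i + d ≤ n →
      φ (eDnD (n + 1) i d) = eUpD (n + 1) i d := by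
    intro d
    induction d with
    | zero => intro i _ h _; omega
    | succ d ih =>
      intro i hi _ hle
      cases d with
      | zero =>
        have hne : i ≠ n := by omega
        simpa [eUpD, eDnD] using (hEF i hi (by omega) hne).2
      | succ d' =>
        have h1 : φ (eDnD (n + 1) i (d' + 1)) = eUpD (n + 1) i (d' + 1) :=
          ih i hi (by omega) (by omega)
        have hne : i + d' + 1 ≠ n := by omega
        have hF : φ (FU (n + 1) (i + d' + 1)) = EU (n + 1) (i + d' + 1) :=
          (hEF _ (by omega) (by omega) hne).2
        show φ (eDnD (n + 1) i (d' + 2)) = eUpD (n + 1) i (d' + 2)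
        rw [eUpD, eDnD, hsub, hmul, hsmul, hmul, hσ, h1, hF]
  have upTop : ∀ d i, 1 ≤ i → 1 ≤ d → i + d = n + 1 →
      φ (eUpD (n + 1) i d) = -eDnD (n + 1) i d := by
    intro d i hi hd hsum
    match d, hd with
    | 1, _ =>
      have : i = n := by omega
      subst this
      simpa [eUpD, eDnD] using hEn
    | (d' + 2), _ =>
      have h1 : φ (eUpD (n + 1) i (d' + 1)) = eDnD (n + 1) i (d' + 1) :=
        up (d' + 1) i hi (by omega) (by omega)
      have htop : i + d' + 1 = n := by omega
      have hE : φ (EU (n + 1) (i + d' + 1)) = -FU (n + 1) (i + d' + 1) := by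
        rw [htop]; exact hEn
      show φ (eUpD (n + 1) i (d' + 2)) = -eDnD (n + 1) i (d' + 2)
      rw [eUpD, eDnD, hsub, hmul, hsmul, hmul, hσq, h1, hE]
      exact negKeyLeft (M := kq) qq (FU (n + 1) (i + d' + 1)) (eDnD (n + 1) i (d' + 1))
  have dnTop : ∀ d i, 1 ≤ i → 1 ≤ d → i + d = n + 1 →
      φ (eDnD (n + 1) i d) = -eUpD (n + 1) i d := by
    intro d i hi hd hsum
    match d, hd with
    | 1, _ =>
      have : i = n := by omega
      subst this
      simpa [eUpD, eDnD] using hFn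
    | (d' + 2), _ =>
      have h1 : φ (eDnD (n + 1) i (d' + 1)) = eUpD (n + 1) i (d' + 1) :=
        dn (d' + 1) i hi (by omega) (by omega)
      have htop : i + d' + 1 = n := by omega
      have hF : φ (FU (n + 1) (i + d' + 1)) = -EU (n + 1) (i + d' + 1) := by
        rw [htop]; exact hFn
      show φ (eDnD (n + 1) i (d' + 2)) = -eUpD (n + 1) i (d' + 2)
      rw [eUpD, eDnD, hsub, hmul, hsmul, hmul, hσ, h1, hF]
      exact negKeyRight (M := kq) qq⁻¹ (eUpD (n + 1) i (d' + 1)) (EU (n + 1) (i + d' + 1))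
  constructor
  · intro i h1 h2
    have hlt : i < n + 1 := by omega
    constructor
    · simpa [eGen, hlt, show ¬ (n + 1 < i) by omega] using
        upTop (n + 1 - i) i h1 (by omega) (by omega)
    · simpa [eGen, hlt, show ¬ (n + 1 < i) by omega] using
        dnTop (n + 1 - i) i h1 (by omega) (by omega)
  · intro i j hi hin hj hjn hne
    rcases lt_or_gt_of_ne hne with h | h
    · simpa [eGen, h, show ¬ (j < i) by omega, show ¬ (n + 1 < i) by omega] using
        up (j - i) i hi (by omega) (by omega)
    · simpa [eGen, h, show ¬ (i < j) by omega] using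
        dn (i - j) j hj (by omega) (by omega)
end

section
/- Let N = n + 1 with n ≥ 1, and let * be the noncompact Cartan involution of U_q(gl(n+1)) with real q, i.e. the k-linear involutive anti-automorphism with (q^{±e_{ii}})^* = q^{±e_{ii}}, e_{i,i+1}^* = e_{i+1,i} and e_{i+1,i}^* = e_{i,i+1} for 1 ≤ i ≤ n-1, and e_{n,n+1}^* = -e_{n+1,n}, e_{n+1,n}^* = -e_{n,n+1}. Then for all 1 ≤ i ≤ n one has e_{i,n+1}^* = -e'_{n+1,i} and e_{n+1,i}^* = -e'_{i,n+1}, where e'_{i,n+1} and e'_{n+1,i} are the primed composite root vectors. -/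
/-- A `k`-linear anti-automorphism of `U_q(gl(N))`: additive, `k`-linear,
unital, anti-multiplicative and bijective. -/
def IsLinearAntiAut (N : ℕ) (φ : Uq N → Uq N) : Prop :=
  Function.Bijective φ ∧
  (∀ x y : Uq N, φ (x + y) = φ x + φ y) ∧
  (∀ (c : kq) (x : Uq N), φ (c • x) = c • φ x) ∧
  φ 1 = 1 ∧
  (∀ x y : Uq N, φ (x * y) = φ y * φ x)

/-- The property of being the noncompact Cartan involution `*` of `U_q(gl(n+1))` with
real `q`: a `k`-linear anti-automorphism with `(q^{±e_{ii}})^* = q^{±e_{ii}}`,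
`e_{i,i+1}^* = e_{i+1,i}` and `e_{i+1,i}^* = e_{i,i+1}` for `i ≠ n`, and
`e_{n,n+1}^* = -e_{n+1,n}`, `e_{n+1,n}^* = -e_{n,n+1}`. -/
def IsNoncompactStarReal (n N : ℕ) (φ : Uq N → Uq N) : Prop :=
  IsLinearAntiAut N φ ∧
  (∀ i, 1 ≤ i → i ≤ N → φ (KU N i) = KU N i ∧ φ (KinvU N i) = KinvU N i) ∧
  (∀ i, 1 ≤ i → i + 1 ≤ N → i ≠ n → φ (EU N i) = FU N i ∧ φ (FU N i) = EU N i) ∧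
  φ (EU N n) = -FU N n ∧ φ (FU N n) = -EU N n

lemma helper_sub {R : Type*} [Ring R] [Module kq R] (a b : R) :
    a + (-1 : kq) • b = a - b := by
  rw [neg_one_smul, sub_eq_add_neg]

lemma helper_sub' {R : Type*} [Ring R] [Module kq R] (a b : R) :
    a - b = a + (-1 : kq) • b := (helper_sub a b).symm

lemma helper_neg1 {R : Type*} [Ring R] [Module kq R] (A B : R) (c : kq) :
    -A * B - c • (B * -A) = -(A * B - c • (B * A)) := by
  rw [neg_mul, mul_neg, smul_neg, sub_neg_eq_add, neg_sub]
  exact neg_add_eq_sub _ _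

lemma helper_neg2 {R : Type*} [Ring R] [Module kq R] (A B : R) (c : kq) :
    B * -A - c • (-A * B) = -(B * A - c • (A * B)) := by
  rw [mul_neg, neg_mul, smul_neg, sub_neg_eq_add, neg_sub]
  exact neg_add_eq_sub _ _

lemma star_sub_aux {n : ℕ} {φ : Uq (n + 1) → Uq (n + 1)}
    (hφ : IsNoncompactStarReal n (n + 1) φ) (x y : Uq (n + 1)) :
    φ (x - y) = φ x - φ y := by
  obtain ⟨⟨_, hadd, hsmul, _, _⟩, _⟩ := hφ
  rw [helper_sub' x y, hadd, hsmul]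
  exact helper_sub _ _

lemma star_comp_aux {n : ℕ} {φ : Uq (n + 1) → Uq (n + 1)}
    (hφ : IsNoncompactStarReal n (n + 1) φ) (i : ℕ) (hi : 1 ≤ i) :
    ∀ d, 1 ≤ d → i + d ≤ n →
      φ (eUpD (n + 1) i d) = eDnD' (n + 1) i d ∧
      φ (eDnD (n + 1) i d) = eUpD' (n + 1) i d := by
  have hsub := star_sub_aux hφ
  obtain ⟨⟨_, hadd, hsmul, hone, hmul⟩, hK, hEF, hEn, hFn⟩ := hφ
  intro d
  induction d with
  | zero => intro h; omega
  | succ d ih =>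
    intro _ hdn
    rcases Nat.eq_zero_or_pos d with hd0 | hd1
    · subst hd0
      have h := hEF i hi (by omega) (by omega)
      simpa [eUpD, eDnD, eUpD', eDnD'] using h
    · obtain ⟨d', rfl⟩ : ∃ d', d = d' + 1 := ⟨d - 1, by omega⟩
      have ihd := ih (by omega) (by omega)
      have hE := hEF (i + d' + 1) (by omega) (by omega) (by omega)
      constructor
      · show φ (eUpD (n + 1) i (d' + 1) * EU (n + 1) (i + d' + 1) -
            qq⁻¹ • (EU (n + 1) (i + d' + 1) * eUpD (n + 1) i (d' + 1))) = _
        rw [hsub, hmul, hsmul, hmul, ihd.1, hE.1]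
        rfl
      · show φ (FU (n + 1) (i + d' + 1) * eDnD (n + 1) i (d' + 1) -
            qq • (eDnD (n + 1) i (d' + 1) * FU (n + 1) (i + d' + 1))) = _
        rw [hsub, hmul, hsmul, hmul, ihd.2, hE.2]
        rfl

/-- for the noncompact Cartan involution `*` of `U_q(gl(n+1))` with real `q`,
one has `e_{i,n+1}^* = -e'_{n+1,i}` and `e_{n+1,i}^* = -e'_{i,n+1}` for `1 ≤ i ≤ n`, where
the `e'` are the primed composite root vectors. -/
theorem noncompact_star_real_on_cartan_weyl (n : ℕ) (hn : 1 ≤ n)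
    (φ : Uq (n + 1) → Uq (n + 1)) (hφ : IsNoncompactStarReal n (n + 1) φ)
    (hinv : ∀ x, φ (φ x) = x)
    (i : ℕ) (hi : 1 ≤ i) (hin : i ≤ n) :
    φ (eGen (n + 1) i (n + 1)) = -eGen' (n + 1) (n + 1) i ∧
    φ (eGen (n + 1) (n + 1) i) = -eGen' (n + 1) i (n + 1) := by
  have hφ' := hφ
  obtain ⟨⟨_, hadd, hsmul, hone, hmul⟩, hK, hEF, hEn, hFn⟩ := hφ'
  have hsub := star_sub_aux hφ
  rw [eGen, if_pos (by omega : i < n + 1),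
      eGen, if_neg (by omega : ¬ n + 1 < i), if_pos (by omega : i < n + 1),
      eGen', if_neg (by omega : ¬ n + 1 < i), if_pos (by omega : i < n + 1),
      eGen', if_pos (by omega : i < n + 1)]
  rcases Nat.lt_or_ge i n with hlt | hge
  · obtain ⟨m, hm⟩ : ∃ m, n + 1 - i = m + 2 := ⟨n - i - 1, by omega⟩
    rw [hm]
    have hidx : i + m + 1 = n := by omega
    have ihd := star_comp_aux hφ i hi (m + 1) (by omega) (by omega)
    constructor
    · show φ (eUpD (n + 1) i (m + 1) * EU (n + 1) (i + m + 1) -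
          qq⁻¹ • (EU (n + 1) (i + m + 1) * eUpD (n + 1) i (m + 1))) = _
      rw [hsub, hmul, hsmul, hmul, ihd.1, hidx, hEn]
      show -FU (n + 1) n * eDnD' (n + 1) i (m + 1) -
          qq⁻¹ • (eDnD' (n + 1) i (m + 1) * -FU (n + 1) n) =
          -(FU (n + 1) (i + m + 1) * eDnD' (n + 1) i (m + 1) -
            qq⁻¹ • (eDnD' (n + 1) i (m + 1) * FU (n + 1) (i + m + 1)))
      rw [hidx]
      exact helper_neg1 _ _ _
    · show φ (FU (n + 1) (i + m + 1) * eDnD (n + 1) i (m + 1) -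
          qq • (eDnD (n + 1) i (m + 1) * FU (n + 1) (i + m + 1))) = _
      rw [hsub, hmul, hsmul, hmul, ihd.2, hidx, hFn]
      show eUpD' (n + 1) i (m + 1) * -EU (n + 1) n -
          qq • (-EU (n + 1) n * eUpD' (n + 1) i (m + 1)) =
          -(eUpD' (n + 1) i (m + 1) * EU (n + 1) (i + m + 1) -
            qq • (EU (n + 1) (i + m + 1) * eUpD' (n + 1) i (m + 1)))
      rw [hidx]
      exact helper_neg2 _ _ _
  · have hni : i = n := by omega
    subst hni
    have h1 : i + 1 - i = 1 := by omega
    rw [h1]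
    exact ⟨by simpa [eUpD, eDnD'] using hEn, by simpa [eDnD, eUpD'] using hFn⟩
end
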